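/- Let X_n have continuous density p_n with score ρ_n and suppose the boundary terms vanish as in the preceding identity. Then the Kolmogorov distance between X_n and a standard Gaussian satisfies Kol(X_n, Z) ≤ (1/2)√(π/2) · E[ |X_n + ρ_n(X_n)| ]. -/

import Mathlib

open Real MeasureTheory Set Filter

/-- Standard Gaussian pdf. -/
noncomputable def gaussPdf (x : ℝ) : ℝ := (Real.sqrt (2 * π))⁻¹ * Real.exp (-x ^ 2 / 2)

/-- Standard Gaussian cdf. -/
noncomputable def gaussCdf (x : ℝ) : ℝ := ∫ u in Set.Iic x, gaussPdf u

lemma gaussPdf_pos (x : ℝ) : 0 < gaussPdf x := by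
  unfold gaussPdf
  positivity

lemma gaussPdf_eq (x : ℝ) : gaussPdf x = (Real.sqrt (2 * π))⁻¹ * Real.exp (-(1/2) * x ^ 2) := by
  unfold gaussPdf; ring_nf

lemma continuous_gaussPdf : Continuous gaussPdf := by
  unfold gaussPdf; fun_prop

lemma integrable_gaussPdf : Integrable gaussPdf := by
  have : Integrable (fun x : ℝ => (Real.sqrt (2 * π))⁻¹ * Real.exp (-(1/2) * x ^ 2)) :=
    (integrable_exp_neg_mul_sq (by norm_num)).const_mul _
  exact this.congr (by filter_upwards with x; rw [gaussPdf_eq])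

lemma integral_gaussPdf : ∫ x, gaussPdf x = 1 := by
  have h := integral_gaussian (1/2 : ℝ)
  simp_rw [gaussPdf_eq, MeasureTheory.integral_const_mul, h]
  rw [show (π / (1/2 : ℝ)) = 2 * π by ring]
  rw [inv_mul_cancel₀ (by positivity)]

lemma hasDerivAt_gaussPdf (x : ℝ) : HasDerivAt gaussPdf (-x * gaussPdf x) x := by
  have h1 : HasDerivAt (fun x : ℝ => -x ^ 2 / 2) (-x) x := by
    have := ((hasDerivAt_pow 2 x).neg).div_const 2
    simpa using this.congr_deriv (by ring)
  have := ((h1.exp).const_mul (Real.sqrt (2 * π))⁻¹)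
  unfold gaussPdf
  refine this.congr_deriv ?_
  ring

lemma gaussCdf_tendsto_atTop : Tendsto gaussCdf atTop (nhds 1) := by
  rw [← integral_gaussPdf]
  have hc : AECover (volume : Measure ℝ) atTop (fun t : ℝ => Iic t) :=
    aecover_Iic tendsto_id
  exact hc.integral_tendsto_of_countably_generated integrable_gaussPdf

lemma integral_Ioi_gaussPdf (t : ℝ) : ∫ x in Ioi t, gaussPdf x = 1 - gaussCdf t := by
  have := intervalIntegral.integral_Iic_add_Ioi (b := t) integrable_gaussPdf.integrableOn
    integrable_gaussPdf.integrableOn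
  rw [integral_gaussPdf] at this
  unfold gaussCdf; linarith

lemma gaussCdf_tendsto_atBot : Tendsto gaussCdf atBot (nhds 0) := by
  have hc : AECover (volume : Measure ℝ) atBot (fun t : ℝ => Ioi t) :=
    aecover_Ioi tendsto_id
  have h := hc.integral_tendsto_of_countably_generated integrable_gaussPdf
  rw [integral_gaussPdf] at h
  have h2 : Tendsto (fun t : ℝ => 1 - ∫ x in Ioi t, gaussPdf x) atBot (nhds (1 - 1)) :=
    Tendsto.const_sub _ h
  have h3 : (fun t : ℝ => 1 - ∫ x in Ioi t, gaussPdf x) = gaussCdf := by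
    funext t; rw [integral_Ioi_gaussPdf]; ring
  rw [h3] at h2; simpa using h2

lemma gaussCdf_nonneg (t : ℝ) : 0 ≤ gaussCdf t :=
  setIntegral_nonneg measurableSet_Iic (fun x _ => (gaussPdf_pos x).le)

lemma gaussCdf_le_one (t : ℝ) : gaussCdf t ≤ 1 := by
  have h := integral_Ioi_gaussPdf t
  have : 0 ≤ ∫ x in Ioi t, gaussPdf x :=
    setIntegral_nonneg measurableSet_Ioi (fun x _ => (gaussPdf_pos x).le)
  linarith

lemma gaussCdf_neg (t : ℝ) : gaussCdf (-t) = 1 - gaussCdf t := by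
  have : gaussCdf (-t) = ∫ x in Iic (-t), gaussPdf x := rfl
  rw [this, ← integral_comp_neg_Ioi]
  have : ∀ x : ℝ, gaussPdf (-x) = gaussPdf x := by
    intro x; unfold gaussPdf; ring_nf
  simp_rw [this]
  exact integral_Ioi_gaussPdf t

lemma gaussCdf_zero : gaussCdf 0 = 1/2 := by
  have := gaussCdf_neg 0
  rw [neg_zero] at this; linarith

lemma hasDerivAt_gaussCdf (x : ℝ) : HasDerivAt gaussCdf (gaussPdf x) x := by
  have key : ∀ y : ℝ, gaussCdf y = gaussCdf 0 + ∫ u in (0:ℝ)..y, gaussPdf u := by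
    intro y
    rcases le_total 0 y with h | h
    · rw [intervalIntegral.integral_of_le h]
      have := MeasureTheory.setIntegral_union (f := gaussPdf) (μ := volume)
        (t := Ioc (0:ℝ) y) (Iic_disjoint_Ioc (le_refl (0:ℝ))) measurableSet_Ioc
        integrable_gaussPdf.integrableOn integrable_gaussPdf.integrableOn
      rw [Iic_union_Ioc_eq_Iic h] at this
      exact this
    · rw [intervalIntegral.integral_symm, intervalIntegral.integral_of_le h]
      have := MeasureTheory.setIntegral_union (f := gaussPdf) (μ := volume)
        (t := Ioc y (0:ℝ)) (Iic_disjoint_Ioc (le_refl y)) measurableSet_Ioc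
        integrable_gaussPdf.integrableOn integrable_gaussPdf.integrableOn
      rw [Iic_union_Ioc_eq_Iic h] at this
      unfold gaussCdf
      rw [this]; ring
  have hd : HasDerivAt (fun y => gaussCdf 0 + ∫ u in (0:ℝ)..y, gaussPdf u) (gaussPdf x) x := by
    refine HasDerivAt.const_add _ ?_
    exact intervalIntegral.integral_hasDerivAt_right
      (integrable_gaussPdf.intervalIntegrable)
      (continuous_gaussPdf.stronglyMeasurableAtFilter _ _)
      continuous_gaussPdf.continuousAt
  exact hd.congr_of_eventuallyEq (by filter_upwards with y; rw [key y])

lemma continuous_gaussCdf : Continuous gaussCdf := by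
  have : Differentiable ℝ gaussCdf := fun x => (hasDerivAt_gaussCdf x).differentiableAt
  exact this.continuous

lemma gaussCdf_mono : Monotone gaussCdf := by
  have hd : ∀ x, 0 ≤ deriv gaussCdf x := fun x => by
    rw [(hasDerivAt_gaussCdf x).deriv]; exact (gaussPdf_pos x).le
  exact monotone_of_deriv_nonneg (fun x => (hasDerivAt_gaussCdf x).differentiableAt) hd

lemma gaussPdf_tendsto_atTop : Tendsto gaussPdf atTop (nhds 0) := by
  have h1 : Tendsto (fun x : ℝ => -x ^ 2 / 2) atTop atBot := by
    apply Tendsto.atBot_div_const (by norm_num)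
    exact tendsto_neg_atBot_iff.mpr (tendsto_pow_atTop (by norm_num))
  have := (Real.tendsto_exp_atBot.comp h1).const_mul (Real.sqrt (2 * π))⁻¹
  have e : gaussPdf = fun x => (Real.sqrt (2 * π))⁻¹ * Real.exp (-x ^ 2 / 2) := rfl
  rw [e]
  simpa only [Function.comp, mul_zero] using this

lemma gaussPdf_neg (x : ℝ) : gaussPdf (-x) = gaussPdf x := by unfold gaussPdf; ring_nf

lemma gaussPdf_tendsto_atBot : Tendsto gaussPdf atBot (nhds 0) := by
  have := gaussPdf_tendsto_atTop.comp tendsto_neg_atBot_atTop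
  refine this.congr (fun x => ?_)
  simp [Function.comp, gaussPdf_neg]

lemma sqrt_two_pi_pos : (0:ℝ) < Real.sqrt (2 * π) := Real.sqrt_pos.mpr (by positivity)

lemma key_ineq (t : ℝ) :
    gaussCdf t * (1 - gaussCdf t) ≤ Real.sqrt (2 * π) / 4 * gaussPdf t := by
  set c : ℝ := Real.sqrt (2 * π) / 4 with hc
  set u : ℝ → ℝ := fun s => c * gaussPdf s - gaussCdf s * (1 - gaussCdf s) with hu
  set w : ℝ → ℝ := fun s => 2 * gaussCdf s - 1 - c * s with hw
  have hud : ∀ s, HasDerivAt u (gaussPdf s * w s) s := by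
    intro s
    have h1 := (hasDerivAt_gaussPdf s).const_mul c
    have h2 := (hasDerivAt_gaussCdf s).mul ((hasDerivAt_gaussCdf s).const_sub 1)
    have := h1.sub h2
    refine this.congr_deriv ?_
    simp only [hw]; ring
  have hwd : ∀ s, HasDerivAt w (2 * gaussPdf s - c) s := by
    intro s
    have h1 := (hasDerivAt_gaussCdf s).const_mul 2
    have := (h1.sub_const 1).sub ((hasDerivAt_id s).const_mul c)
    refine this.congr_deriv ?_
    simp [mul_comm]
  have hu0 : u 0 = 0 := by
    have hφ0 : gaussPdf 0 = (Real.sqrt (2 * π))⁻¹ := by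
      unfold gaussPdf; norm_num
    simp only [hu, hφ0, gaussCdf_zero, hc]
    field_simp
    ring
  have hw0 : w 0 = 0 := by simp [hw, gaussCdf_zero]
  have hutop : Tendsto u atTop (nhds 0) := by
    have h1 := gaussPdf_tendsto_atTop.const_mul c
    have h2 := gaussCdf_tendsto_atTop.mul (gaussCdf_tendsto_atTop.const_sub 1)
    have := h1.sub h2
    simpa using this
  -- u is even
  have huneg : ∀ s, u (-s) = u s := by
    intro s
    simp only [hu, gaussPdf_neg, gaussCdf_neg]
    ring
  -- suffices for t ≥ 0
  have main : ∀ s : ℝ, 0 ≤ s → 0 ≤ u s := by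
    intro s hs
    by_cases hcase : ∀ r ∈ Icc 0 s, 0 ≤ w r
    · -- u monotone on [0, s]
      have hmono : MonotoneOn u (Icc 0 s) := by
        apply monotoneOn_of_deriv_nonneg (convex_Icc 0 s)
          (fun x _ => (hud x).continuousAt.continuousWithinAt)
          (fun x hx => ((hud x).differentiableAt).differentiableWithinAt)
        intro x hx
        rw [(hud x).deriv]
        rw [interior_Icc] at hx
        exact mul_nonneg (gaussPdf_pos x).le (hcase x ⟨hx.1.le, hx.2.le⟩)
      have := hmono (left_mem_Icc.mpr hs) (right_mem_Icc.mpr hs) hs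
      rw [hu0] at this; exact this
    · push_neg at hcase
      obtain ⟨r, hr, hrneg⟩ := hcase
      have hrpos : 0 < r := by
        rcases eq_or_lt_of_le hr.1 with h | h
        · exfalso; rw [← h, hw0] at hrneg; exact lt_irrefl 0 hrneg
        · exact h
      -- w concave on [0, ∞)
      have hconc : ConcaveOn ℝ (Ici 0) w := by
        apply AntitoneOn.concaveOn_of_deriv (convex_Ici 0)
          (fun x _ => (hwd x).continuousAt.continuousWithinAt)
          (fun x _ => ((hwd x).differentiableAt).differentiableWithinAt)
        intro x hx y hy hxy
        rw [(hwd x).deriv, (hwd y).deriv]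
        rw [interior_Ici] at hx hy
        have : gaussPdf y ≤ gaussPdf x := by
          unfold gaussPdf
          gcongr (Real.sqrt (2*π))⁻¹ * Real.exp ?_
          have : x ^ 2 ≤ y ^ 2 := by nlinarith [(mem_Ioi.mp hx).le, hxy]
          linarith
        linarith
      -- w ≤ 0 on [s, ∞)
      have hwnonpos : ∀ x, s ≤ x → w x ≤ 0 := by
        intro x hx
        have hxpos : 0 < x := lt_of_lt_of_le hrpos (hr.2.trans hx)
        have hrx : r ≤ x := hr.2.trans hx
        have ha : (0:ℝ) ≤ 1 - r / x := by
          rw [sub_nonneg]; exact div_le_one_of_le₀ hrx hxpos.le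
        have hb : (0:ℝ) ≤ r / x := by positivity
        have hab : (1 - r / x) + r / x = 1 := by ring
        have key := hconc.2 (self_mem_Ici (α := ℝ)) (mem_Ici.mpr hxpos.le) ha hb hab
        rw [smul_eq_mul, smul_eq_mul, smul_eq_mul, smul_eq_mul, mul_zero, zero_add, hw0,
          mul_zero, zero_add] at key
        have hrw : r / x * x = r := div_mul_cancel₀ r hxpos.ne'
        rw [hrw] at key
        by_contra hpos
        push_neg at hpos
        have := mul_pos (div_pos hrpos hxpos) hpos
        exact absurd hrneg (not_lt.mpr (le_trans this.le key))
      -- u antitone on [s, ∞)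
      have hanti : AntitoneOn u (Ici s) := by
        apply antitoneOn_of_deriv_nonpos (convex_Ici s)
          (fun x _ => (hud x).continuousAt.continuousWithinAt)
          (fun x hx => ((hud x).differentiableAt).differentiableWithinAt)
        intro x hx
        rw [(hud x).deriv]
        rw [interior_Ici] at hx
        exact mul_nonpos_of_nonneg_of_nonpos (gaussPdf_pos x).le (hwnonpos x hx.le)
      -- limit gives 0 ≤ u s
      refine le_of_tendsto hutop ?_
      filter_upwards [eventually_ge_atTop s] with x hx
      exact hanti (self_mem_Ici) (mem_Ici.mpr hx) hx
  rcases le_total 0 t with h | h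
  · have := main t h; simp only [hu] at this; linarith
  · have := main (-t) (by linarith)
    rw [huneg] at this
    simp only [hu] at this; linarith

lemma const_eq : Real.sqrt (2 * π) / 4 = 1 / 2 * Real.sqrt (π / 2) := by
  rw [show (2 * π) = π / 2 * 2 ^ 2 by ring, Real.sqrt_mul' _ (by positivity)]
  rw [Real.sqrt_sq (by norm_num)]
  ring

/-- Kolmogorov-distance bound for a standard Gaussian target: if `X_n` has density `p`
with score `ρ = p'/p` and vanishing boundary terms, then
`sup_z |P(X_n ≤ z) - Φ(z)| ≤ (1/2)√(π/2) E[|X_n + ρ(X_n)|]`. -/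
theorem stmt16 (p : ℝ → ℝ) (hmeas : Measurable p) (hpos : ∀ x, 0 < p x)
    (hmass : ∫ x, p x = 1)
    (hdiff : ∀ x, DifferentiableAt ℝ p x)
    (hbot : Tendsto (fun x => p x / gaussPdf x) atBot (nhds 0))
    (htop : Tendsto (fun x => p x / gaussPdf x) atTop (nhds 0))
    (hInt : Integrable (fun x => |x + deriv p x / p x| * p x)) :
    ∀ z : ℝ,
      |(∫ x in Set.Iic z, p x) - gaussCdf z| ≤
        (1 / 2) * Real.sqrt (π / 2) * ∫ x, |x + deriv p x / p x| * p x := by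
  intro z
  rw [← const_eq]
  set c : ℝ := Real.sqrt (2 * π) / 4 with hcdef
  have hpInt : Integrable p := by
    by_contra hni
    rw [integral_undef hni] at hmass
    norm_num at hmass
  set g : ℝ → ℝ := fun x => p x / gaussPdf x with hg
  set g' : ℝ → ℝ := fun x => (x + deriv p x / p x) * p x / gaussPdf x with hg'
  set q : ℝ → ℝ := fun x => gaussCdf (min x z) - gaussCdf x * gaussCdf z with hq
  set h : ℝ → ℝ := fun x => q x * g x with hh
  have hφne : ∀ x : ℝ, gaussPdf x ≠ 0 := fun x => (gaussPdf_pos x).ne'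
  have hpne : ∀ x : ℝ, p x ≠ 0 := fun x => (hpos x).ne'
  -- derivative of g
  have hgd : ∀ x, HasDerivAt g (g' x) x := by
    intro x
    have := ((hdiff x).hasDerivAt).div (hasDerivAt_gaussPdf x) (hφne x)
    refine this.congr_deriv ?_
    simp only [hg']
    field_simp [hφne x, hpne x]
    ring
  -- bounds on q
  have hq_nonneg : ∀ x, 0 ≤ q x := by
    intro x
    simp only [hq]
    rcases le_total x z with hxz | hxz
    · rw [min_eq_left hxz]
      nlinarith [gaussCdf_nonneg x, gaussCdf_le_one z]
    · rw [min_eq_right hxz]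
      nlinarith [gaussCdf_nonneg z, gaussCdf_le_one x]
  have hq_le_one : ∀ x, q x ≤ 1 := by
    intro x
    simp only [hq]
    nlinarith [gaussCdf_nonneg (min x z), gaussCdf_le_one (min x z),
      gaussCdf_nonneg x, gaussCdf_nonneg z]
  have hq_le : ∀ x, q x ≤ c * gaussPdf x := by
    intro x
    refine le_trans ?_ (key_ineq x)
    simp only [hq]
    rcases le_total x z with hxz | hxz
    · rw [min_eq_left hxz]
      have := gaussCdf_mono hxz
      nlinarith [gaussCdf_nonneg x]
    · rw [min_eq_right hxz]
      have := gaussCdf_mono hxz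
      nlinarith [gaussCdf_nonneg x, gaussCdf_le_one x]
  -- continuity of h
  have hgcont : Continuous g := by
    have hpc : Continuous p := by
      have : Differentiable ℝ p := fun x => hdiff x
      exact this.continuous
    exact hpc.div continuous_gaussPdf hφne
  have hqcont : Continuous q :=
    (continuous_gaussCdf.comp (continuous_id.min continuous_const)).sub
      (continuous_gaussCdf.mul continuous_const)
  have hhcont : Continuous h := hqcont.mul hgcont
  -- limits of h
  have hg_nonneg : ∀ x, 0 ≤ g x := fun x => div_nonneg (hpos x).le (gaussPdf_pos x).le
  have hhbot : Tendsto h atBot (nhds 0) := by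
    apply squeeze_zero (fun x => mul_nonneg (hq_nonneg x) (hg_nonneg x))
      (fun x => ?_) hbot
    calc q x * g x ≤ 1 * g x := by
          exact mul_le_mul_of_nonneg_right (hq_le_one x) (hg_nonneg x)
      _ = g x := one_mul _
  have hhtop : Tendsto h atTop (nhds 0) := by
    apply squeeze_zero (fun x => mul_nonneg (hq_nonneg x) (hg_nonneg x))
      (fun x => ?_) htop
    calc q x * g x ≤ 1 * g x := by
          exact mul_le_mul_of_nonneg_right (hq_le_one x) (hg_nonneg x)
      _ = g x := one_mul _
  -- integrability of q * g'
  have habs : ∀ x, |q x * g' x| ≤ c * (|x + deriv p x / p x| * p x) := by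
    intro x
    rw [abs_mul, abs_of_nonneg (hq_nonneg x)]
    have hg'abs : |g' x| = |x + deriv p x / p x| * p x / gaussPdf x := by
      simp only [hg', abs_div, abs_mul, abs_of_pos (hpos x),
        abs_of_pos (gaussPdf_pos x)]
    rw [hg'abs]
    rw [div_eq_mul_inv, ← mul_assoc]
    calc q x * (|x + deriv p x / p x| * p x) * (gaussPdf x)⁻¹
        ≤ c * gaussPdf x * (|x + deriv p x / p x| * p x) * (gaussPdf x)⁻¹ := by
          refine mul_le_mul_of_nonneg_right (mul_le_mul_of_nonneg_right (hq_le x)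
            (mul_nonneg (abs_nonneg _) (hpos x).le)) (inv_nonneg.mpr (gaussPdf_pos x).le)
      _ = c * (|x + deriv p x / p x| * p x) := by
          field_simp [hφne x]
  have hqg'meas : Measurable (fun x => q x * g' x) := by
    apply hqcont.measurable.mul
    exact ((measurable_id.add ((measurable_deriv p).div hmeas)).mul hmeas).div
      continuous_gaussPdf.measurable
  have hqg'int : Integrable (fun x => q x * g' x) := by
    refine Integrable.mono' (hInt.const_mul c) hqg'meas.aestronglyMeasurable ?_
    filter_upwards with x
    rw [Real.norm_eq_abs]
    exact habs x
  -- FTC on Iic z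
  have hderivIic : ∀ x ∈ Iio z,
      HasDerivAt h ((1 - gaussCdf z) * p x + q x * g' x) x := by
    intro x hx
    have hev : q =ᶠ[nhds x] fun y => gaussCdf y * (1 - gaussCdf z) := by
      filter_upwards [Iio_mem_nhds hx] with y hy
      simp only [hq]
      rw [min_eq_left (le_of_lt hy)]
      ring
    have hqd : HasDerivAt q (gaussPdf x * (1 - gaussCdf z)) x := by
      exact (((hasDerivAt_gaussCdf x).mul_const (1 - gaussCdf z)).congr_of_eventuallyEq hev)
    have := hqd.mul (hgd x)
    have heq : gaussPdf x * (1 - gaussCdf z) * g x = (1 - gaussCdf z) * p x := by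
      simp only [hg]
      field_simp [hφne x]
    rw [heq] at this
    exact this
  have hderivIoi : ∀ x ∈ Ioi z,
      HasDerivAt h (-(gaussCdf z) * p x + q x * g' x) x := by
    intro x hx
    have hev : q =ᶠ[nhds x] fun y => gaussCdf z - gaussCdf y * gaussCdf z := by
      filter_upwards [Ioi_mem_nhds hx] with y hy
      simp only [hq]
      rw [min_eq_right (le_of_lt hy)]
    have hqd : HasDerivAt q (-(gaussPdf x * gaussCdf z)) x := by
      have := (((hasDerivAt_gaussCdf x).mul_const (gaussCdf z)).const_sub (gaussCdf z))
      exact this.congr_of_eventuallyEq hev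
    have := hqd.mul (hgd x)
    have heq : -(gaussPdf x * gaussCdf z) * g x = -(gaussCdf z) * p x := by
      simp only [hg]
      field_simp [hφne x]
    rw [heq] at this
    exact this
  have hint1 : Integrable (fun x => (1 - gaussCdf z) * p x + q x * g' x) :=
    (hpInt.const_mul _).add hqg'int
  have hint2 : Integrable (fun x => -(gaussCdf z) * p x + q x * g' x) :=
    (hpInt.const_mul _).add hqg'int
  have hIic := integral_Iic_of_hasDerivAt_of_tendsto (f := h)
    (hhcont.continuousWithinAt) hderivIic hint1.integrableOn hhbot
  have hIoi := integral_Ioi_of_hasDerivAt_of_tendsto (f := h) (a := z)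
    (hhcont.continuousWithinAt) (fun x hx => hderivIoi x hx) hint2.integrableOn hhtop
  rw [sub_zero] at hIic
  rw [zero_sub] at hIoi
  -- split the integrals
  rw [integral_add ((hpInt.const_mul _).integrableOn) hqg'int.integrableOn] at hIic hIoi
  rw [integral_const_mul] at hIic hIoi
  have hsplitp : (∫ x in Iic z, p x) + (∫ x in Ioi z, p x) = 1 := by
    rw [intervalIntegral.integral_Iic_add_Ioi hpInt.integrableOn hpInt.integrableOn, hmass]
  have hsplitq : (∫ x in Iic z, q x * g' x) + (∫ x in Ioi z, q x * g' x)
      = ∫ x, q x * g' x :=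
    intervalIntegral.integral_Iic_add_Ioi hqg'int.integrableOn hqg'int.integrableOn
  have hkey : (∫ x in Iic z, p x) - gaussCdf z = -∫ x, q x * g' x := by
    linear_combination hIic + hIoi - hsplitq + gaussCdf z * hsplitp
  rw [hkey, abs_neg]
  calc |∫ x, q x * g' x| ≤ ∫ x, |q x * g' x| := by
        have := norm_integral_le_integral_norm (μ := volume) (f := fun x => q x * g' x)
        simp only [Real.norm_eq_abs] at this
        exact this
    _ ≤ ∫ x, c * (|x + deriv p x / p x| * p x) := by
        refine integral_mono hqg'int.abs (hInt.const_mul c) (fun x => habs x)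
    _ = c * ∫ x, |x + deriv p x / p x| * p x := integral_const_mul c _
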